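/- With a_p^{(n)} = p^n/(p!·2^p) and M_n the mode, suppose u_n ≤ M_n, δ_n = o(u_n) and u_n·√(ln u_n)/√n = o(δ_n). Then a_{u_n−δ_n}^{(n)}/a_{u_n}^{(n)} ≤ exp(−n·δ_n²/(2u_n²)·(1+o(1))), and in particular u_n · a_{u_n−δ_n}^{(n)}/a_{u_n}^{(n)} → 0 as n → ∞. -/

import Mathlib

open Filter Asymptotics

/-- The sequence `a_p^{(n)} = p^n / (p! · 2^p)`. -/
noncomputable def a (n p : ℕ) : ℝ := (p : ℝ) ^ n / ((Nat.factorial p : ℝ) * 2 ^ p)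

lemma a_nonneg (n p : ℕ) : 0 ≤ a n p := by unfold a; positivity

lemma aux_log_one_sub {x : ℝ} (h0 : 0 ≤ x) (h1 : x ≤ 1/2) :
    Real.log (1 - x) ≤ -x - x^2/2 + 2*x^3 := by
  have habs : |x| < 1 := by rw [abs_of_nonneg h0]; linarith
  have h := (abs_le.mp (Real.abs_log_sub_add_sum_range_le habs 2)).2
  simp only [Finset.sum_range_succ, Finset.sum_range_zero, abs_of_nonneg h0] at h
  have hdiv : x^3 / (1-x) ≤ 2*x^3 := by
    rw [div_le_iff₀ (by linarith)]
    nlinarith [mul_nonneg (pow_nonneg h0 3) (show (0:ℝ) ≤ 1 - 2*x by linarith)]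
  norm_num at h
  linarith

lemma aux_fact (v k : ℕ) : (v + k).factorial ≤ v.factorial * (v + k) ^ k := by
  induction k with
  | zero => simp
  | succ k ih =>
    have h1 : (v + (k+1)).factorial = (v + k + 1) * (v + k).factorial := by
      rw [← Nat.add_assoc, Nat.factorial_succ]
    rw [h1]
    calc (v + k + 1) * (v + k).factorial ≤ (v + k + 1) * (v.factorial * (v + k) ^ k) :=
          Nat.mul_le_mul_left _ ih
      _ ≤ (v + k + 1) * (v.factorial * (v + k + 1) ^ k) :=
          Nat.mul_le_mul_left _ (Nat.mul_le_mul_left _ (Nat.pow_le_pow_left (by omega) k))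
      _ = v.factorial * (v + (k+1)) ^ (k+1) := by ring

lemma aux_fact' {v u : ℕ} (h : v ≤ u) : u.factorial ≤ v.factorial * u ^ (u - v) := by
  obtain ⟨k, rfl⟩ : ∃ k, u = v + k := ⟨u - v, by omega⟩
  simpa using aux_fact v k

lemma aux_mode {n m : ℕ} (h2m : 2 ≤ m) (key : a n (m-1) ≤ a n m) :
    ((m:ℝ)-1) * Real.log (2*(m:ℝ)) ≤ n := by
  obtain ⟨j, rfl⟩ : ∃ j, m = j + 1 := ⟨m - 1, by omega⟩
  have hj1 : 1 ≤ j := by omega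
  simp only [Nat.add_sub_cancel] at key
  have hjR : (1:ℝ) ≤ (j:ℝ) := by exact_mod_cast hj1
  unfold a at key
  have hd1 : (0:ℝ) < (j.factorial : ℝ) * 2 ^ j := by positivity
  have hd2 : (0:ℝ) < ((j+1).factorial : ℝ) * 2 ^ (j+1) := by positivity
  rw [div_le_div_iff₀ hd1 hd2] at key
  have hfs : ((j+1).factorial : ℝ) = ((j:ℝ)+1) * (j.factorial : ℝ) := by
    rw [Nat.factorial_succ]; push_cast; ring
  have key2 : (j:ℝ)^n * (2*((j:ℝ)+1)) ≤ ((j:ℝ)+1)^n := by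
    have h := key
    rw [hfs] at h
    push_cast at h
    rw [← mul_le_mul_iff_left₀ hd1]
    convert h using 1 <;> ring
  have hlhs : (0:ℝ) < (j:ℝ)^n * (2*((j:ℝ)+1)) := by positivity
  have hlog := Real.log_le_log hlhs key2
  rw [Real.log_mul (by positivity) (by positivity), Real.log_mul (by norm_num) (by positivity),
    Real.log_pow, Real.log_pow] at hlog
  have hstep : Real.log ((j:ℝ)+1) - Real.log (j:ℝ) ≤ 1/(j:ℝ) := by
    have h1 : Real.log (((j:ℝ)+1)/(j:ℝ)) ≤ ((j:ℝ)+1)/(j:ℝ) - 1 :=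
      Real.log_le_sub_one_of_pos (by positivity)
    rw [Real.log_div (by positivity) (by positivity)] at h1
    have : ((j:ℝ)+1)/(j:ℝ) - 1 = 1/(j:ℝ) := by field_simp; ring
    linarith [this ▸ h1]
  have hjpos : (0:ℝ) < (j:ℝ) := by linarith
  have hfin : (j:ℝ) * (Real.log 2 + Real.log ((j:ℝ)+1)) ≤ n := by
    have h2 : Real.log 2 + Real.log ((j:ℝ)+1) ≤ (n:ℝ) * (1/(j:ℝ)) := by
      have := mul_le_mul_of_nonneg_left hstep (by positivity : (0:ℝ) ≤ (n:ℝ))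
      linarith
    calc (j:ℝ) * (Real.log 2 + Real.log ((j:ℝ)+1)) ≤ (j:ℝ) * ((n:ℝ) * (1/(j:ℝ))) := by
          apply mul_le_mul_of_nonneg_left h2 (le_of_lt hjpos)
      _ = n := by field_simp
  have heq : ((j:ℝ)+1-1) * Real.log (2*((j:ℝ)+1)) = (j:ℝ) * (Real.log 2 + Real.log ((j:ℝ)+1)) := by
    rw [Real.log_mul (by norm_num) (by positivity)]; ring
  push_cast
  rw [heq]
  exact hfin

lemma aux_main {n u δ : ℕ} (h2u : 2 ≤ u) (h2d : 2*(δ:ℝ) ≤ (u:ℝ)) (h1d : 1 ≤ δ) (hn1 : 1 ≤ n)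
    (hE : ((u:ℝ)-1) * Real.log (2*(u:ℝ)) ≤ (n:ℝ)) :
    a n (u - δ) / a n u ≤ Real.exp (-(n:ℝ) * (δ:ℝ)^2 / (2*(u:ℝ)^2) *
      (1 + (-(4*((δ:ℝ)/(u:ℝ))) - 2*(u:ℝ)*Real.log (2*(u:ℝ))/((n:ℝ)*(δ:ℝ))))) := by
  have hU : (0:ℝ) < (u:ℝ) := by positivity
  have hD : (0:ℝ) < (δ:ℝ) := by exact_mod_cast h1d
  have hn : (0:ℝ) < (n:ℝ) := by exact_mod_cast hn1
  have hdu : δ ≤ u := by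
    have : (δ:ℝ) ≤ (u:ℝ) := by linarith
    exact_mod_cast this
  set U := (u:ℝ) with hUdef
  set D := (δ:ℝ) with hDdef
  set v := u - δ with hvdef
  have hvR : (v:ℝ) = U - D := by rw [hvdef]; push_cast [Nat.cast_sub hdu]; ring
  have hUD : (0:ℝ) < U - D := by linarith
  set x := D/U with hxdef
  have hx0 : 0 ≤ x := by positivity
  have hxh : x ≤ 1/2 := by rw [hxdef, div_le_iff₀ hU]; linarith
  set L : ℝ := -x - x^2/2 + 2*x^3 with hLdef
  set Lg : ℝ := Real.log (2*U) with hLgdef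
  have hLg : Lg = Real.log 2 + Real.log U := Real.log_mul two_ne_zero (ne_of_gt hU)
  have h1 : (U-D)^n ≤ Real.exp ((n:ℝ)*L) * U^n := by
    have hbase : U - D = (1-x)*U := by
      rw [hxdef, sub_mul, one_mul, div_mul_cancel₀ _ (ne_of_gt hU)]
    have h1x : (0:ℝ) < 1 - x := by linarith
    have heq : (U-D)^n = Real.exp ((n:ℝ) * Real.log (1-x)) * U^n := by
      rw [hbase, mul_pow, Real.exp_nat_mul, Real.exp_log h1x]
    rw [heq]
    have := aux_log_one_sub hx0 hxh
    gcongr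
  have hsplit : u = v + δ := by omega
  have hnat : u.factorial ≤ v.factorial * u ^ δ := by
    have h := aux_fact' (show v ≤ u by omega)
    rwa [show u - v = δ by omega] at h
  have hexpU : Real.exp (D * Real.log U) = U ^ δ := by
    rw [hDdef, Real.exp_nat_mul, Real.exp_log hU]
  have hexp2 : Real.exp (D * Real.log 2) = (2:ℝ) ^ δ := by
    rw [hDdef, Real.exp_nat_mul, Real.exp_log (by norm_num : (0:ℝ) < 2)]
  have h2 : (u.factorial:ℝ) * 2^u ≤
      (Real.exp (D*Real.log U) * Real.exp (D*Real.log 2)) * ((v.factorial:ℝ) * 2^v) := by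
    rw [hexpU, hexp2]
    calc (u.factorial:ℝ) * 2^u = (u.factorial:ℝ) * (2^v * 2^δ) := by
          rw [hsplit, pow_add]
      _ ≤ ((v.factorial:ℝ) * U^δ) * (2^v * 2^δ) := by
          have : (u.factorial:ℝ) ≤ (v.factorial:ℝ) * U^δ := by
            rw [hUdef]; exact_mod_cast hnat
          gcongr
      _ = U^δ * 2^δ * ((v.factorial:ℝ) * 2^v) := by ring
  set T : ℝ := -(n:ℝ) * D^2 / (2*U^2) * (1 + (-(4*(D/U)) - 2*U*Lg/((n:ℝ)*D))) with hTdef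
  have hT : T = -((n:ℝ)*D^2/(2*U^2)) + 2*(n:ℝ)*D^3/U^3 + D*Lg/U := by
    rw [hTdef]; field_simp; ring
  have hLE : (n:ℝ)*L + D*Real.log U + D*Real.log 2 =
      -((n:ℝ)*D/U) - (n:ℝ)*D^2/(2*U^2) + 2*(n:ℝ)*D^3/U^3 + D*Lg := by
    rw [hLg, hLdef, hxdef]; field_simp; ring
  have hred : D*Lg - D*Lg/U ≤ (n:ℝ)*D/U := by
    have hmul := mul_le_mul_of_nonneg_left hE (le_of_lt (div_pos hD hU))
    have e1 : (D/U)*((U-1)*Lg) = D*Lg - D*Lg/U := by field_simp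
    have e2 : (D/U)*(n:ℝ) = (n:ℝ)*D/U := by ring
    rw [e1, e2] at hmul
    exact hmul
  have hexpo : (n:ℝ)*L + D*Real.log U + D*Real.log 2 ≤ T := by
    rw [hLE, hT]; linarith
  have hau : 0 < a n u := by
    simp only [a]
    exact div_pos (pow_pos hU n) (by positivity)
  rw [div_le_iff₀ hau]
  simp only [a]
  rw [hvR]
  have hQ1 : (0:ℝ) < (v.factorial:ℝ) * 2^v := by positivity
  have hQ2 : (0:ℝ) < (u.factorial:ℝ) * 2^u := by positivity
  rw [← mul_div_assoc, div_le_div_iff₀ hQ1 hQ2]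
  calc (U-D)^n * ((u.factorial:ℝ) * 2^u)
      ≤ (Real.exp ((n:ℝ)*L) * U^n) *
        ((Real.exp (D*Real.log U) * Real.exp (D*Real.log 2)) * ((v.factorial:ℝ) * 2^v)) :=
        mul_le_mul h1 h2 (by positivity) (by positivity)
    _ = Real.exp ((n:ℝ)*L + D*Real.log U + D*Real.log 2) * U^n * ((v.factorial:ℝ) * 2^v) := by
        rw [Real.exp_add, Real.exp_add]; ring
    _ ≤ Real.exp T * U^n * ((v.factorial:ℝ) * 2^v) := by
        have := Real.exp_le_exp.mpr hexpo
        gcongr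

theorem stmt12 (u δ M : ℕ → ℕ)
    (hu : Monotone u) (hun : ∀ n, u n ≤ n) (hu' : Tendsto u atTop atTop)
    (hM : ∀ n ≥ 1, 1 ≤ M n ∧ M n ≤ n ∧ ∀ p, 1 ≤ p → p ≤ n → a n p ≤ a n (M n))
    (huM : ∀ᶠ n in atTop, u n ≤ M n)
    (hδ : (fun n => (δ n : ℝ)) =o[atTop] fun n => (u n : ℝ))
    (hδ' : (fun n => (u n : ℝ) * Real.sqrt (Real.log (u n)) / Real.sqrt n)
      =o[atTop] fun n => (δ n : ℝ)) :
    (∃ ε : ℕ → ℝ, Tendsto ε atTop (nhds 0) ∧ ∀ᶠ n in atTop,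
        a n (u n - δ n) / a n (u n) ≤
          Real.exp (-(n : ℝ) * (δ n : ℝ) ^ 2 / (2 * (u n : ℝ) ^ 2) * (1 + ε n))) ∧
      Tendsto (fun n => (u n : ℝ) * (a n (u n - δ n) / a n (u n))) atTop (nhds 0) := by
  -- the explicit error term
  set εf : ℕ → ℝ := fun n => -(4*((δ n:ℝ)/(u n:ℝ))) -
      2*(u n:ℝ)*Real.log (2*(u n:ℝ))/((n:ℝ)*(δ n:ℝ)) with hεdef
  -- basic eventual facts
  have F1 : ∀ᶠ n in atTop, 2 ≤ u n := hu'.eventually_ge_atTop 2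
  have F2 : ∀ᶠ n in atTop, 2*(δ n:ℝ) ≤ (u n:ℝ) := by
    filter_upwards [isLittleO_iff.mp hδ (by norm_num : (0:ℝ) < 1/2)] with n hb
    rw [Real.norm_eq_abs, Real.norm_eq_abs, abs_of_nonneg (by positivity),
      abs_of_nonneg (by positivity)] at hb
    linarith
  have F3 : ∀ᶠ n in atTop, 1 ≤ δ n := by
    filter_upwards [isLittleO_iff.mp hδ' one_pos, F1, eventually_ge_atTop 1] with n hb h2u hn1
    by_contra hcon
    have hδ0 : δ n = 0 := by omega
    rw [hδ0] at hb
    simp only [Nat.cast_zero, norm_zero, mul_zero] at hb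
    have hpos : 0 < (u n:ℝ) * Real.sqrt (Real.log (u n)) / Real.sqrt n := by
      apply div_pos
      · apply mul_pos (by positivity)
        exact Real.sqrt_pos.mpr (Real.log_pos (by exact_mod_cast h2u))
      · exact Real.sqrt_pos.mpr (by exact_mod_cast hn1)
    rw [Real.norm_eq_abs, abs_of_nonneg (le_of_lt hpos)] at hb
    linarith
  have FE : ∀ᶠ n in atTop, ((u n:ℝ)-1) * Real.log (2*(u n:ℝ)) ≤ (n:ℝ) := by
    filter_upwards [F1, huM, eventually_ge_atTop 1] with n h2u hMn hn1
    obtain ⟨h1M, hMn', hmax⟩ := hM n hn1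
    have h2M : 2 ≤ M n := le_trans h2u hMn
    have key : a n (M n - 1) ≤ a n (M n) := hmax (M n - 1) (by omega) (by omega)
    have hmode := aux_mode h2M key
    have hl1 : (0:ℝ) ≤ Real.log (2*(u n:ℝ)) := by
      apply Real.log_nonneg
      have : (2:ℝ) ≤ (u n:ℝ) := by exact_mod_cast h2u
      linarith
    have hMcast : (u n:ℝ) ≤ (M n:ℝ) := by exact_mod_cast hMn
    calc ((u n:ℝ)-1) * Real.log (2*(u n:ℝ)) ≤ ((M n:ℝ)-1) * Real.log (2*(M n:ℝ)) := by
          have h1MR : (1:ℝ) ≤ (M n:ℝ) := by exact_mod_cast h1M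
          apply mul_le_mul (by linarith)
            (Real.log_le_log (by positivity) (by linarith)) hl1 (by linarith)
      _ ≤ (n:ℝ) := hmode
  -- the main eventual inequality
  have hmain : ∀ᶠ n in atTop,
      a n (u n - δ n) / a n (u n) ≤
        Real.exp (-(n : ℝ) * (δ n : ℝ) ^ 2 / (2 * (u n : ℝ) ^ 2) * (1 + εf n)) := by
    filter_upwards [F1, F2, F3, FE, eventually_ge_atTop 1] with n h2u h2d h1d hEn hn1
    exact aux_main h2u h2d h1d hn1 hEn
  -- tendsto of εf
  have t1 : Tendsto (fun n => (δ n:ℝ)/(u n:ℝ)) atTop (nhds 0) := hδ.tendsto_div_nhds_zero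
  have t2 : Tendsto (fun n => (u n:ℝ) * Real.sqrt (Real.log (u n)) / Real.sqrt n / (δ n:ℝ))
      atTop (nhds 0) := hδ'.tendsto_div_nhds_zero
  have hlogn : Tendsto (fun n:ℕ => Real.sqrt (Real.log n) / Real.sqrt n) atTop (nhds 0) := by
    have h0 : Tendsto (fun x:ℝ => Real.log x / x) atTop (nhds 0) := by
      have := Real.tendsto_pow_log_div_mul_add_atTop 1 0 1 one_ne_zero
      simpa using this
    have h1 : Tendsto (fun n:ℕ => Real.log n / n) atTop (nhds 0) :=
      h0.comp tendsto_natCast_atTop_atTop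
    have h2 : Tendsto (fun n:ℕ => Real.sqrt (Real.log n / n)) atTop (nhds (Real.sqrt 0)) :=
      (Real.continuous_sqrt.tendsto 0).comp h1
    rw [Real.sqrt_zero] at h2
    apply h2.congr'
    filter_upwards [eventually_ge_atTop 1] with n hn1
    exact Real.sqrt_div (Real.log_nonneg (by exact_mod_cast hn1)) _
  have hk : Tendsto (fun n:ℕ => 4 * (Real.sqrt (Real.log (u n)) / Real.sqrt n))
      atTop (nhds 0) := by
    have hb : Tendsto (fun n:ℕ => 4 * (Real.sqrt (Real.log n) / Real.sqrt n)) atTop (nhds 0) := by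
      simpa using hlogn.const_mul (4:ℝ)
    apply squeeze_zero' ?_ ?_ hb
    · filter_upwards with n; positivity
    · filter_upwards [F1] with n h2u
      have hle : Real.sqrt (Real.log (u n)) ≤ Real.sqrt (Real.log n) := by
        apply Real.sqrt_le_sqrt
        apply Real.log_le_log (by positivity)
        exact_mod_cast hun n
      gcongr
  have hg : Tendsto (fun n:ℕ => 2*(u n:ℝ)*Real.log (2*(u n:ℝ))/((n:ℝ)*(δ n:ℝ)))
      atTop (nhds 0) := by
    have hprod : Tendsto (fun n:ℕ =>
        ((u n:ℝ) * Real.sqrt (Real.log (u n)) / Real.sqrt n / (δ n:ℝ)) *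
        (4 * (Real.sqrt (Real.log (u n)) / Real.sqrt n))) atTop (nhds 0) := by
      simpa using t2.mul hk
    apply squeeze_zero' ?_ ?_ hprod
    · filter_upwards [F1, F3, eventually_ge_atTop 1] with n h2u h1d hn1
      have hl : (0:ℝ) ≤ Real.log (2*(u n:ℝ)) := by
        apply Real.log_nonneg
        have : (2:ℝ) ≤ (u n:ℝ) := by exact_mod_cast h2u
        linarith
      positivity
    · filter_upwards [F1, F3, eventually_ge_atTop 1] with n h2u h1d hn1
      have hU : (0:ℝ) < (u n:ℝ) := by positivity
      have hD : (0:ℝ) < (δ n:ℝ) := by exact_mod_cast h1d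
      have hn : (0:ℝ) < (n:ℝ) := by exact_mod_cast hn1
      have h2R : (2:ℝ) ≤ (u n:ℝ) := by exact_mod_cast h2u
      have hlogU : (0:ℝ) ≤ Real.log (u n) := Real.log_nonneg (by linarith)
      have hlog2 : Real.log (2*(u n:ℝ)) ≤ 2 * Real.log (u n) := by
        rw [Real.log_mul two_ne_zero (ne_of_gt hU), two_mul]
        have : Real.log 2 ≤ Real.log (u n) := Real.log_le_log (by norm_num) h2R
        linarith
      have e : ((u n:ℝ) * Real.sqrt (Real.log (u n)) / Real.sqrt n / (δ n:ℝ)) *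
          (4 * (Real.sqrt (Real.log (u n)) / Real.sqrt n)) =
          4*(u n:ℝ)*Real.log (u n)/((n:ℝ)*(δ n:ℝ)) := by
        rw [show (4:ℝ)*(u n:ℝ)*Real.log (u n)/((n:ℝ)*(δ n:ℝ)) =
            4*(u n:ℝ)*(Real.sqrt (Real.log (u n)))^2/(((Real.sqrt (n:ℝ))^2)*(δ n:ℝ)) by
          rw [Real.sq_sqrt hlogU, Real.sq_sqrt (le_of_lt hn)]]
        ring
      have hl2 : (0:ℝ) ≤ Real.log (2*(u n:ℝ)) := Real.log_nonneg (by linarith)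
      rw [e]
      gcongr ?_ / _
      nlinarith [hl2, hlog2, mul_nonneg (le_of_lt hU)
        (show (0:ℝ) ≤ 2*Real.log (u n) - Real.log (2*(u n:ℝ)) by linarith)]
  have hε : Tendsto εf atTop (nhds 0) := by
    have := ((t1.const_mul (4:ℝ)).neg).sub hg
    simpa using this
  refine ⟨⟨εf, hε, hmain⟩, ?_⟩
  -- second part
  have hb2 : ∀ᶠ n in atTop, 16*(u n:ℝ)^2*Real.log (u n) ≤ (n:ℝ)*(δ n:ℝ)^2 := by
    filter_upwards [isLittleO_iff.mp hδ' (by norm_num : (0:ℝ) < 1/4), F1, F3,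
      eventually_ge_atTop 1] with n hb h2u h1d hn1
    have hU : (0:ℝ) < (u n:ℝ) := by positivity
    have hD : (0:ℝ) < (δ n:ℝ) := by exact_mod_cast h1d
    have hn : (0:ℝ) < (n:ℝ) := by exact_mod_cast hn1
    have h2R : (2:ℝ) ≤ (u n:ℝ) := by exact_mod_cast h2u
    have hlogU : (0:ℝ) ≤ Real.log (u n) := Real.log_nonneg (by linarith)
    rw [Real.norm_eq_abs, Real.norm_eq_abs, abs_of_nonneg (by positivity),
      abs_of_nonneg (le_of_lt hD)] at hb
    have hnn : (0:ℝ) ≤ (u n:ℝ) * Real.sqrt (Real.log (u n)) / Real.sqrt n := by positivity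
    have hsq := mul_self_le_mul_self hnn hb
    have e : ((u n:ℝ) * Real.sqrt (Real.log (u n)) / Real.sqrt n) *
        ((u n:ℝ) * Real.sqrt (Real.log (u n)) / Real.sqrt n) =
        (u n:ℝ)^2 * Real.log (u n) / (n:ℝ) := by
      rw [show (u n:ℝ)^2 * Real.log (u n) / (n:ℝ) =
          (u n:ℝ)^2 * (Real.sqrt (Real.log (u n)))^2/((Real.sqrt (n:ℝ))^2) by
        rw [Real.sq_sqrt hlogU, Real.sq_sqrt (le_of_lt hn)]]
      ring
    rw [e] at hsq
    have h16 : (u n:ℝ)^2 * Real.log (u n) / (n:ℝ) ≤ (δ n:ℝ)^2/16 := by nlinarith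
    rw [div_le_div_iff₀ hn (by norm_num : (0:ℝ) < 16)] at h16
    nlinarith
  have heps : ∀ᶠ n in atTop, -(1/2:ℝ) ≤ εf n :=
    hε.eventually (eventually_ge_nhds (by norm_num : -(1/2:ℝ) < 0))
  have hub : ∀ᶠ n in atTop,
      (u n:ℝ) * (a n (u n - δ n) / a n (u n)) ≤ ((u n:ℝ))⁻¹ := by
    filter_upwards [hmain, hb2, heps, F1, F3, eventually_ge_atTop 1]
      with n hRa hb2n hepsn h2u h1d hn1
    have hU : (0:ℝ) < (u n:ℝ) := by positivity
    have h2R : (2:ℝ) ≤ (u n:ℝ) := by exact_mod_cast h2u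
    have hlogU : (0:ℝ) ≤ Real.log (u n) := Real.log_nonneg (by linarith)
    obtain ⟨A, hAdef⟩ : ∃ A:ℝ, A = (n:ℝ)*(δ n:ℝ)^2/(2*(u n:ℝ)^2) := ⟨_, rfl⟩
    have hA0 : 0 ≤ A := by rw [hAdef]; positivity
    have hQ : 8*Real.log (u n) ≤ A := by
      rw [hAdef, le_div_iff₀ (by positivity)]
      nlinarith
    have h5 : A*(1/2) ≤ A*(1+εf n) := mul_le_mul_of_nonneg_left (by linarith) hA0
    have h6 : 2*Real.log (u n) ≤ A*(1/2) := by linarith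
    have hexpineq : -(n:ℝ) * (δ n:ℝ)^2/(2*(u n:ℝ)^2)*(1+εf n) ≤ -(2*Real.log (u n)) := by
      have hre : -(n:ℝ) * (δ n:ℝ)^2/(2*(u n:ℝ)^2)*(1+εf n) = -(A*(1+εf n)) := by
        rw [hAdef]; ring
      rw [hre]
      exact neg_le_neg (le_trans h6 h5)
    have hR2 : a n (u n - δ n) / a n (u n) ≤ Real.exp (-(2*Real.log (u n))) :=
      le_trans hRa (Real.exp_le_exp.mpr hexpineq)
    have hexpval : Real.exp (-(2*Real.log (u n))) = ((u n:ℝ)*(u n:ℝ))⁻¹ := by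
      rw [Real.exp_neg, two_mul, Real.exp_add, Real.exp_log hU]
    calc (u n:ℝ) * (a n (u n - δ n) / a n (u n)) ≤ (u n:ℝ) * (((u n:ℝ)*(u n:ℝ))⁻¹) := by
          rw [← hexpval]
          exact mul_le_mul_of_nonneg_left hR2 (le_of_lt hU)
      _ = ((u n:ℝ))⁻¹ := by field_simp
  apply squeeze_zero' ?_ hub ?_
  · filter_upwards with n
    exact mul_nonneg (by positivity) (div_nonneg (a_nonneg _ _) (a_nonneg _ _))
  · exact tendsto_inv_atTop_zero.comp (tendsto_natCast_atTop_atTop.comp hu')
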